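/- Let q be a prime power and A ⊆ F_q \ {0}. If |A| ≥ q^{2/3}, then |A + A·A| > q/2, where A + A·A = {a + bc : a, b, c ∈ A}. -/

import Mathlib

open scoped BigOperators
open Finset

set_option maxHeartbeats 2000000

section Aux

variable {F : Type*} [Field F] [Fintype F] [DecidableEq F]

private lemma conj_addChar (ψ : AddChar F ℂ) (y : F) :
    (starRingEnd ℂ) (ψ y) = ψ (-y) := by
  rw [AddChar.starComp_apply (Nat.pos_of_ne_zero (CharP.ringChar_ne_zero_of_finite F)),
    AddChar.inv_apply]

/-- Workhorse: second moment identity via additive characters. -/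
private lemma char_energy {ψ : AddChar F ℂ} (hψ : ψ.IsPrimitive)
    {ι : Type*} (T : Finset ι) (σ : ι → F) :
    ∑ u : F, Complex.normSq (∑ t ∈ T, ψ (u * σ t)) =
      (Fintype.card F : ℝ) * ∑ x : F, ((T.filter fun t => σ t = x).card : ℝ) ^ 2 := by
  have main : ∑ u : F, (Complex.normSq (∑ t ∈ T, ψ (u * σ t)) : ℂ) =
      (Fintype.card F : ℂ) * ∑ x : F, ((T.filter fun t => σ t = x).card : ℂ) ^ 2 := by
    calc ∑ u : F, (Complex.normSq (∑ t ∈ T, ψ (u * σ t)) : ℂ)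
        = ∑ u : F, (∑ t ∈ T, ψ (u * σ t)) * ∑ t' ∈ T, ψ (-(u * σ t')) := by
          refine Finset.sum_congr rfl fun u _ => ?_
          rw [← Complex.mul_conj, map_sum]
          simp_rw [conj_addChar]
      _ = ∑ u : F, ∑ t ∈ T, ∑ t' ∈ T, ψ (u * (σ t - σ t')) := by
          refine Finset.sum_congr rfl fun u _ => ?_
          rw [Finset.sum_mul_sum]
          refine Finset.sum_congr rfl fun t _ => Finset.sum_congr rfl fun t' _ => ?_
          rw [← AddChar.map_add_eq_mul]
          congr 1
          ring
      _ = ∑ t ∈ T, ∑ t' ∈ T, ∑ u : F, ψ (u * (σ t - σ t')) := by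
          rw [Finset.sum_comm]
          exact Finset.sum_congr rfl fun t _ => Finset.sum_comm
      _ = ∑ t ∈ T, ∑ t' ∈ T, if σ t - σ t' = 0 then (Fintype.card F : ℂ) else 0 := by
          refine Finset.sum_congr rfl fun t _ => Finset.sum_congr rfl fun t' _ => ?_
          rw [AddChar.sum_mulShift _ hψ]
          split <;> simp
      _ = ∑ t ∈ T, (Fintype.card F : ℂ) * ((T.filter fun t' => σ t' = σ t).card : ℂ) := by
          refine Finset.sum_congr rfl fun t _ => ?_
          rw [← Finset.sum_filter]
          rw [show (T.filter fun t' => σ t - σ t' = 0) = T.filter fun t' => σ t' = σ t from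
            Finset.filter_congr fun t' _ => by rw [sub_eq_zero]; exact eq_comm]
          rw [Finset.sum_const, nsmul_eq_mul, mul_comm]
      _ = (Fintype.card F : ℂ) * ∑ t ∈ T, ((T.filter fun t' => σ t' = σ t).card : ℂ) := by
          rw [Finset.mul_sum]
      _ = (Fintype.card F : ℂ) * ∑ x : F, ((T.filter fun t => σ t = x).card : ℂ) ^ 2 := by
          congr 1
          rw [← Finset.sum_fiberwise T σ (fun t => ((T.filter fun t' => σ t' = σ t).card : ℂ))]
          refine Finset.sum_congr rfl fun x _ => ?_
          have h : ∀ t ∈ T.filter (fun t => σ t = x),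
              ((T.filter fun t' => σ t' = σ t).card : ℂ)
                = ((T.filter fun t => σ t = x).card : ℂ) := by
            intro t ht
            rw [(Finset.mem_filter.mp ht).2]
          rw [Finset.sum_congr rfl h, Finset.sum_const, nsmul_eq_mul, sq]
  exact_mod_cast main

private lemma diag_energy {ψ : AddChar F ℂ} (hψ : ψ.IsPrimitive) (B : Finset F) :
    ∑ u : F, Complex.normSq (∑ x ∈ B, ψ (u * x)) = (Fintype.card F : ℝ) * B.card := by
  rw [char_energy hψ B (fun x => x)]
  congr 1
  calc ∑ x : F, ((B.filter fun t => t = x).card : ℝ) ^ 2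
      = ∑ x : F, (if x ∈ B then (1 : ℝ) else 0) := by
        refine Finset.sum_congr rfl fun x _ => ?_
        rw [Finset.filter_eq' B x]
        split <;> simp
    _ = B.card := by
        rw [Finset.sum_ite_mem, Finset.univ_inter, Finset.sum_const, nsmul_eq_mul, mul_one]

private lemma normSq_sum_le (s : Finset F) (w : F → ℂ) :
    Complex.normSq (∑ b ∈ s, w b) ≤ s.card * ∑ b ∈ s, Complex.normSq (w b) := by
  have h1 : ‖∑ b ∈ s, w b‖ ≤ ∑ b ∈ s, ‖w b‖ := norm_sum_le _ _
  have h2 : (∑ b ∈ s, ‖w b‖) ^ 2 ≤ (∑ b ∈ s, (1 : ℝ) ^ 2) * ∑ b ∈ s, ‖w b‖ ^ 2 := by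
    simpa using Finset.sum_mul_sq_le_sq_mul_sq s (fun _ => 1) (fun b => ‖w b‖)
  have h3 : Complex.normSq (∑ b ∈ s, w b) = ‖∑ b ∈ s, w b‖ ^ 2 := by
    rw [Complex.normSq_eq_norm_sq]
  rw [h3]
  calc ‖∑ b ∈ s, w b‖ ^ 2 ≤ (∑ b ∈ s, ‖w b‖) ^ 2 :=
        pow_le_pow_left₀ (norm_nonneg _) h1 2
    _ ≤ (s.card : ℝ) * ∑ b ∈ s, ‖w b‖ ^ 2 := by simpa using h2
    _ = (s.card : ℝ) * ∑ b ∈ s, Complex.normSq (w b) := by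
        congr 1
        exact Finset.sum_congr rfl fun b _ => by
          rw [Complex.normSq_eq_norm_sq]

end Aux

/-- Sum-product for large sets in finite fields: if `A ⊆ F_q \ {0}` and `|A| ≥ q^{2/3}`,
then `|A + A·A| > q/2`. -/
theorem sum_product_large_sets
    {F : Type*} [Field F] [Fintype F] [DecidableEq F]
    (A : Finset F) (hA0 : (0 : F) ∉ A)
    (hA : (A.card : ℝ) ≥ (Fintype.card F : ℝ) ^ ((2 : ℝ) / 3)) :
    ((Finset.image₂ (· + ·) A (Finset.image₂ (· * ·) A A)).card : ℝ) >
      (Fintype.card F : ℝ) / 2 := by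
  classical
  obtain ⟨ψ, hψ⟩ : ∃ ψ : AddChar F ℂ, ψ.IsPrimitive :=
    ⟨_, AddChar.FiniteField.primitiveChar_to_Complex_isPrimitive F⟩
  set q : ℕ := Fintype.card F with hqdef
  set n : ℕ := A.card with hndef
  set S : Finset F := Finset.image₂ (· + ·) A (Finset.image₂ (· * ·) A A) with hSdef
  set T : Finset (F × F × F) := A ×ˢ A ×ˢ A with hTdef
  set σ : F × F × F → F := fun t => t.1 + t.2.1 * t.2.2 with hσdef
  have hq2 : 1 < q := Fintype.one_lt_card
  have hQ1 : (1 : ℝ) < (q : ℝ) := by exact_mod_cast hq2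
  have hQ0 : (0 : ℝ) < (q : ℝ) := lt_trans one_pos hQ1
  have hnq : (n : ℝ) ≤ (q : ℝ) := by
    have : n ≤ q := (Finset.card_le_univ A).trans_eq Finset.card_univ
    exact_mod_cast this
  have hN1 : (1 : ℝ) ≤ (n : ℝ) := by
    refine le_trans ?_ hA
    rw [show (1 : ℝ) = (q : ℝ) ^ (0 : ℝ) from (Real.rpow_zero _).symm]
    exact Real.rpow_le_rpow_of_exponent_le hQ1.le (by norm_num)
  have hN3 : (q : ℝ) ^ 2 ≤ (n : ℝ) ^ 3 := by
    have h2 : ((q : ℝ) ^ ((2 : ℝ) / 3)) ^ (3 : ℕ) = (q : ℝ) ^ (2 : ℕ) := by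
      rw [← Real.rpow_natCast ((q : ℝ) ^ ((2 : ℝ) / 3)) 3, ← Real.rpow_mul hQ0.le,
        ← Real.rpow_natCast (q : ℝ) 2]
      norm_num
    calc (q : ℝ) ^ 2 = ((q : ℝ) ^ ((2 : ℝ) / 3)) ^ (3 : ℕ) := h2.symm
      _ ≤ (n : ℝ) ^ 3 := pow_le_pow_left₀ (Real.rpow_nonneg hQ0.le _) hA 3
  -- fiber counts
  have hmaps : ∀ t ∈ T, σ t ∈ S := by
    intro t ht
    rw [hTdef] at ht
    rw [Finset.mem_product, Finset.mem_product] at ht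
    exact Finset.mem_image₂_of_mem ht.1 (Finset.mem_image₂_of_mem ht.2.1 ht.2.2)
  have hTcard : T.card = n * (n * n) := by
    rw [hTdef]
    simp [Finset.card_product, hndef]
  have hfib : ((n : ℝ) * ((n : ℝ) * (n : ℝ)))
      = ∑ x ∈ S, ((T.filter fun t => σ t = x).card : ℝ) := by
    have h := Finset.card_eq_sum_card_fiberwise hmaps
    rw [hTcard] at h
    exact_mod_cast congrArg (Nat.cast : ℕ → ℝ) h
  -- Cauchy–Schwarz
  have hCS : ((n : ℝ) * ((n : ℝ) * (n : ℝ))) ^ 2 ≤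
      (S.card : ℝ) * ∑ x : F, ((T.filter fun t => σ t = x).card : ℝ) ^ 2 := by
    have h1 : (∑ x ∈ S, ((T.filter fun t => σ t = x).card : ℝ)) ^ 2 ≤
        (S.card : ℝ) * ∑ x ∈ S, ((T.filter fun t => σ t = x).card : ℝ) ^ 2 := by
      simpa using Finset.sum_mul_sq_le_sq_mul_sq S (fun _ => 1)
        (fun x => ((T.filter fun t => σ t = x).card : ℝ))
    have h2 : ∑ x ∈ S, ((T.filter fun t => σ t = x).card : ℝ) ^ 2 ≤
        ∑ x : F, ((T.filter fun t => σ t = x).card : ℝ) ^ 2 :=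
      Finset.sum_le_sum_of_subset_of_nonneg (Finset.subset_univ S)
        (fun _ _ _ => sq_nonneg _)
    rw [hfib]
    exact h1.trans (mul_le_mul_of_nonneg_left h2 (Nat.cast_nonneg _))
  -- energy bound via characters
  have hfact : ∀ u : F, (∑ t ∈ T, ψ (u * σ t)) =
      (∑ a ∈ A, ψ (u * a)) * (∑ b ∈ A, ∑ c ∈ A, ψ (u * (b * c))) := by
    intro u
    calc (∑ t ∈ T, ψ (u * σ t))
        = ∑ a ∈ A, ∑ b ∈ A, ∑ c ∈ A, ψ (u * (a + b * c)) := by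
          rw [hTdef, Finset.sum_product]
          refine Finset.sum_congr rfl fun a _ => ?_
          rw [Finset.sum_product]
      _ = ∑ a ∈ A, ∑ b ∈ A, ∑ c ∈ A, ψ (u * a) * ψ (u * (b * c)) := by
          refine Finset.sum_congr rfl fun a _ => Finset.sum_congr rfl fun b _ =>
            Finset.sum_congr rfl fun c _ => ?_
          rw [mul_add, AddChar.map_add_eq_mul]
      _ = (∑ a ∈ A, ψ (u * a)) * (∑ b ∈ A, ∑ c ∈ A, ψ (u * (b * c))) := by
          rw [Finset.sum_mul_sum]
          exact Finset.sum_congr rfl fun a _ => Finset.sum_congr rfl fun b _ =>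
            (Finset.mul_sum _ _ _).symm
  have hSA : ∑ u : F, Complex.normSq (∑ a ∈ A, ψ (u * a)) = (q : ℝ) * n :=
    diag_energy hψ A
  have hSA0 : Complex.normSq (∑ a ∈ A, ψ ((0 : F) * a)) = (n : ℝ) ^ 2 := by
    simp only [zero_mul, AddChar.map_zero_eq_one, Finset.sum_const, nsmul_eq_mul, mul_one]
    rw [Complex.normSq_natCast]
    push_cast
    ring
  have hTA0 : Complex.normSq (∑ b ∈ A, ∑ c ∈ A, ψ ((0 : F) * (b * c))) = (n : ℝ) ^ 4 := by
    simp only [zero_mul, AddChar.map_zero_eq_one, Finset.sum_const, nsmul_eq_mul, mul_one]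
    rw [Complex.normSq_mul, Complex.normSq_natCast]
    push_cast
    ring
  have hTAbound : ∀ u : F, u ≠ 0 →
      Complex.normSq (∑ b ∈ A, ∑ c ∈ A, ψ (u * (b * c))) ≤ (n : ℝ) * ((q : ℝ) * n) := by
    intro u hu
    refine (normSq_sum_le A (fun b => ∑ c ∈ A, ψ (u * (b * c)))).trans ?_
    refine mul_le_mul_of_nonneg_left ?_ (Nat.cast_nonneg _)
    have h2 : ∑ b ∈ A, Complex.normSq (∑ c ∈ A, ψ (u * (b * c)))
        ≤ ∑ b : F, Complex.normSq (∑ c ∈ A, ψ (u * (b * c))) :=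
      Finset.sum_le_sum_of_subset_of_nonneg (Finset.subset_univ A)
        (fun _ _ _ => Complex.normSq_nonneg _)
    refine h2.trans ?_
    have h3 : ∑ b : F, Complex.normSq (∑ c ∈ A, ψ (u * (b * c)))
        = ∑ v : F, Complex.normSq (∑ c ∈ A, ψ (v * c)) := by
      refine Fintype.sum_bijective (fun b => u * b) (mulLeft_bijective₀ u hu) _ _ fun b => ?_
      congr 1
      exact Finset.sum_congr rfl fun c _ => by rw [mul_assoc]
    rw [h3, diag_energy hψ A]
  have hSAerase : ∑ u ∈ Finset.univ.erase (0 : F),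
      Complex.normSq (∑ a ∈ A, ψ (u * a)) = (q : ℝ) * n - (n : ℝ) ^ 2 := by
    have h := Finset.add_sum_erase Finset.univ
      (fun u => Complex.normSq (∑ a ∈ A, ψ (u * a))) (Finset.mem_univ (0 : F))
    simp only [hSA, hSA0] at h
    linarith
  have hE : (q : ℝ) * ∑ x : F, ((T.filter fun t => σ t = x).card : ℝ) ^ 2 ≤
      (n : ℝ) ^ 6 + ((q : ℝ) * n - (n : ℝ) ^ 2) * ((n : ℝ) * ((q : ℝ) * n)) := by
    rw [← char_energy hψ T σ]
    have hsplit := (Finset.add_sum_erase Finset.univ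
      (fun u => Complex.normSq (∑ t ∈ T, ψ (u * σ t))) (Finset.mem_univ (0 : F))).symm
    rw [hsplit]
    have h0 : Complex.normSq (∑ t ∈ T, ψ ((0 : F) * σ t)) = (n : ℝ) ^ 6 := by
      rw [hfact 0, Complex.normSq_mul, hSA0, hTA0]
      ring
    beta_reduce
    rw [h0]
    have hrest : ∑ u ∈ Finset.univ.erase (0 : F),
        Complex.normSq (∑ t ∈ T, ψ (u * σ t)) ≤
        ((q : ℝ) * n - (n : ℝ) ^ 2) * ((n : ℝ) * ((q : ℝ) * n)) := by
      calc ∑ u ∈ Finset.univ.erase (0 : F), Complex.normSq (∑ t ∈ T, ψ (u * σ t))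
          ≤ ∑ u ∈ Finset.univ.erase (0 : F),
            Complex.normSq (∑ a ∈ A, ψ (u * a)) * ((n : ℝ) * ((q : ℝ) * n)) := by
            refine Finset.sum_le_sum fun u hu => ?_
            rw [hfact u, Complex.normSq_mul]
            exact mul_le_mul_of_nonneg_left
              (hTAbound u (Finset.ne_of_mem_erase hu)) (Complex.normSq_nonneg _)
        _ = ((q : ℝ) * n - (n : ℝ) ^ 2) * ((n : ℝ) * ((q : ℝ) * n)) := by
            rw [← Finset.sum_mul, hSAerase]
    linarith
  -- final arithmetic
  have hscard : (0 : ℝ) ≤ (S.card : ℝ) := Nat.cast_nonneg _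
  set N : ℝ := (n : ℝ) with hNdef
  set Q : ℝ := (q : ℝ) with hQdef
  set D : ℝ := N ^ 6 + (Q * N - N ^ 2) * (N * (Q * N)) with hDdef
  have hN0 : (0 : ℝ) < N := lt_of_lt_of_le one_pos hN1
  have hQN2 : (0 : ℝ) ≤ (Q * N - N ^ 2) * (N * (Q * N)) := by
    apply mul_nonneg
    · nlinarith [hnq, hN0]
    · positivity
  have hD0 : 0 < D := by
    rw [hDdef]
    nlinarith [hQN2, pow_pos hN0 6]
  have hkey2 : Q * ((N * (N * N)) ^ 2) ≤ (S.card : ℝ) * D := by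
    calc Q * ((N * (N * N)) ^ 2)
        ≤ Q * ((S.card : ℝ) * ∑ x : F, ((T.filter fun t => σ t = x).card : ℝ) ^ 2) :=
          mul_le_mul_of_nonneg_left hCS hQ0.le
      _ = (S.card : ℝ) * (Q * ∑ x : F, ((T.filter fun t => σ t = x).card : ℝ) ^ 2) := by
          ring
      _ ≤ (S.card : ℝ) * D := mul_le_mul_of_nonneg_left hE hscard
  have h2N : D < 2 * ((N * (N * N)) ^ 2) := by
    have h1 : Q ^ 2 * N ^ 3 ≤ N ^ 3 * N ^ 3 :=
      mul_le_mul_of_nonneg_right hN3 (by positivity)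
    have h2 : (0 : ℝ) < Q * N ^ 4 := by positivity
    rw [hDdef]
    nlinarith [hN1, hQ0, h1, h2]
  rw [gt_iff_lt, div_lt_iff₀ (by norm_num : (0 : ℝ) < 2)]
  have hchain : Q * D < ((S.card : ℝ) * 2) * D := by
    calc Q * D < Q * (2 * ((N * (N * N)) ^ 2)) :=
          mul_lt_mul_of_pos_left h2N hQ0
      _ = 2 * (Q * ((N * (N * N)) ^ 2)) := by ring
      _ ≤ 2 * ((S.card : ℝ) * D) := by linarith
      _ = ((S.card : ℝ) * 2) * D := by ring
  exact lt_of_mul_lt_mul_right hchain hD0.le
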